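/- In the ring A = ℚ[a,b]/⟨a^{n+1}, b²⟩ with n ≥ 1, the kernel of the ℚ-linear map given by multiplication by a + b is the two-dimensional subspace spanned by aⁿ − a^{n−1}b and aⁿb. -/
import Mathlib

set_option synthInstance.maxHeartbeats 400000
set_option maxHeartbeats 1000000

open MvPolynomial

noncomputable section

/-- The ideal `⟨a^(n+1), b²⟩` of `ℚ[a,b]`, with `a = X 0`, `b = X 1`. -/
def relIdeal (n : ℕ) : Ideal (MvPolynomial (Fin 2) ℚ) :=
  Ideal.span {X 0 ^ (n + 1), X 1 ^ 2}

namespace KerAux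

abbrev RR := MvPolynomial (Fin 2) ℚ

def mono (i j : ℕ) : Fin 2 →₀ ℕ := Finsupp.single 0 i + Finsupp.single 1 j

@[simp] lemma mono_apply_zero (i j : ℕ) : mono i j 0 = i := by
  simp [mono, Finsupp.single_apply]

@[simp] lemma mono_apply_one (i j : ℕ) : mono i j 1 = j := by
  simp [mono, Finsupp.single_apply]

lemma eq_mono (f : Fin 2 →₀ ℕ) : f = mono (f 0) (f 1) := by
  ext x
  fin_cases x <;> simp

lemma mono_eq_iff {i j i' j' : ℕ} : mono i j = mono i' j' ↔ i = i' ∧ j = j' := by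
  constructor
  · intro h
    exact ⟨by simpa using congrArg (fun f => f 0) h, by simpa using congrArg (fun f => f 1) h⟩
  · rintro ⟨rfl, rfl⟩; rfl

lemma Xpow_eq (i : ℕ) : (X 0 ^ i : RR) = monomial (mono i 0) 1 := by
  rw [X_pow_eq_monomial]; congr 1; simp [mono]

lemma Xpow1_eq (k : ℕ) : (X 1 ^ k : RR) = monomial (mono 0 k) 1 := by
  rw [X_pow_eq_monomial]; congr 1; simp [mono]

lemma XpowX_eq (i : ℕ) : (X 0 ^ i * X 1 : RR) = monomial (mono i 1) 1 := by
  rw [X_pow_eq_monomial, X, monomial_mul, mul_one]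
  congr 1

lemma coeff_relIdeal {n : ℕ} {p : RR} (hp : p ∈ relIdeal n) {i j : ℕ}
    (hi : i ≤ n) (hj : j ≤ 1) : coeff (mono i j) p = 0 := by
  rw [relIdeal, Ideal.mem_span_pair] at hp
  obtain ⟨u, v, rfl⟩ := hp
  rw [coeff_add, Xpow_eq, Xpow1_eq, coeff_mul_monomial', coeff_mul_monomial',
    if_neg, if_neg, add_zero]
  · intro h
    have := h 1
    simp at this
    omega
  · intro h
    have := h 0
    simp at this
    omega

lemma monomial_mem {n : ℕ} (f : Fin 2 →₀ ℕ) (c : ℚ)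
    (h : n + 1 ≤ f 0 ∨ 2 ≤ f 1) : (monomial f c : RR) ∈ relIdeal n := by
  rcases h with h | h
  · have hle : Finsupp.single (0 : Fin 2) (n+1) ≤ f := by
      intro x
      fin_cases x <;> simp [Finsupp.single_apply] <;> omega
    have : (monomial f c : RR) = monomial (f - Finsupp.single 0 (n+1)) c * X 0 ^ (n+1) := by
      rw [X_pow_eq_monomial, monomial_mul, mul_one, tsub_add_cancel_of_le hle]
    rw [this]
    exact Ideal.mul_mem_left _ _ (Ideal.subset_span (by simp))
  · have hle : Finsupp.single (1 : Fin 2) 2 ≤ f := by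
      intro x
      fin_cases x <;> simp [Finsupp.single_apply] <;> omega
    have : (monomial f c : RR) = monomial (f - Finsupp.single 1 2) c * X 1 ^ 2 := by
      rw [X_pow_eq_monomial, monomial_mul, mul_one, tsub_add_cancel_of_le hle]
    rw [this]
    exact Ideal.mul_mem_left _ _ (Ideal.subset_span (by simp))

lemma mem_of_coeff {n : ℕ} {p : RR}
    (h : ∀ i ≤ n, ∀ j ≤ 1, coeff (mono i j) p = 0) : p ∈ relIdeal n := by
  rw [p.as_sum]
  apply Ideal.sum_mem
  intro f hf
  by_cases h0 : f 0 ≤ n ∧ f 1 ≤ 1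
  · have hf' : coeff f p = 0 := by
      rw [eq_mono f]
      exact h _ h0.1 _ h0.2
    rw [hf', monomial_zero]
    exact Ideal.zero_mem _
  · push_neg at h0
    apply monomial_mem
    by_cases h1 : f 0 ≤ n
    · exact Or.inr (by omega)
    · exact Or.inl (by omega)

lemma coeff_mul_sum0 (p : RR) (i : ℕ) :
    coeff (mono (i+1) 0) ((X 0 + X 1) * p) = coeff (mono i 0) p := by
  have hsplit : (X 0 + X 1) * p = p * X 0 + p * X 1 := by ring
  have h0 : mono (i+1) 0 = mono i 0 + Finsupp.single 0 1 := by
    ext x; fin_cases x <;> simp [Finsupp.single_apply]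
  have t0 : coeff (mono (i+1) 0) (p * X 0) = coeff (mono i 0) p := by
    rw [h0, coeff_mul_X]
  have t1 : coeff (mono (i+1) 0) (p * X 1) = 0 := by
    rw [coeff_mul_X', if_neg]
    simp [Finsupp.mem_support_iff]
  rw [hsplit, coeff_add, t0, t1, add_zero]

lemma coeff_mul_sum1 (p : RR) (i : ℕ) :
    coeff (mono (i+1) 1) ((X 0 + X 1) * p)
      = coeff (mono i 1) p + coeff (mono (i+1) 0) p := by
  have hsplit : (X 0 + X 1) * p = p * X 0 + p * X 1 := by ring
  have t0 : coeff (mono (i+1) 1) (p * X 0) = coeff (mono i 1) p := by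
    have h0 : mono (i+1) 1 = mono i 1 + Finsupp.single 0 1 := by
      ext x; fin_cases x <;> simp [Finsupp.single_apply]
    rw [h0, coeff_mul_X]
  have t1 : coeff (mono (i+1) 1) (p * X 1) = coeff (mono (i+1) 0) p := by
    have h1 : mono (i+1) 1 = mono (i+1) 0 + Finsupp.single 1 1 := by
      ext x; fin_cases x <;> simp [Finsupp.single_apply]
    rw [h1, coeff_mul_X]
  rw [hsplit, coeff_add, t0, t1]

lemma mk_smul {n : ℕ} (r : ℚ) (x : RR) :
    (Ideal.Quotient.mk (relIdeal n)) (r • x) = r • (Ideal.Quotient.mk (relIdeal n)) x := by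
  rw [← Ideal.Quotient.mkₐ_eq_mk ℚ]
  exact map_smul (Ideal.Quotient.mkₐ ℚ (relIdeal n)) r x

end KerAux

open KerAux

/-- In `A = ℚ[a,b]/⟨a^(n+1), b²⟩` with `n ≥ 1`, the kernel of multiplication by `a + b` is the
two-dimensional subspace spanned by `aⁿ − a^(n−1)b` and `aⁿb`. -/
theorem ker_mul_a_add_b (n : ℕ) (hn : 1 ≤ n) :
    LinearMap.ker (LinearMap.mulLeft ℚ (Ideal.Quotient.mk (relIdeal n) (X 0 + X 1)))
      = Submodule.span ℚ
          {Ideal.Quotient.mk (relIdeal n) (X 0 ^ n - X 0 ^ (n - 1) * X 1),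
           Ideal.Quotient.mk (relIdeal n) (X 0 ^ n * X 1)} ∧
    Module.finrank ℚ
      (LinearMap.ker
        (LinearMap.mulLeft ℚ (Ideal.Quotient.mk (relIdeal n) (X 0 + X 1)))) = 2 := by
  obtain ⟨m, rfl⟩ : ∃ m, n = m + 1 := ⟨n - 1, (Nat.succ_pred_eq_of_pos hn).symm⟩
  simp only [Nat.add_sub_cancel]
  set G1 : RR := X 0 ^ (m+1) - X 0 ^ m * X 1 with hG1
  set G2 : RR := X 0 ^ (m+1) * X 1 with hG2
  set I := relIdeal (m+1) with hIdef
  -- membership of the products in the ideal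
  have hmem1 : (X 0 + X 1) * G1 ∈ I := by
    have h : (X 0 + X 1) * G1 = 1 * X 0 ^ (m+1+1) + (-(X 0 ^ m)) * X 1 ^ 2 := by
      rw [hG1]; ring
    rw [h]
    exact Ideal.add_mem _
      (Ideal.mul_mem_left _ _ (Ideal.subset_span (by simp)))
      (Ideal.mul_mem_left _ _ (Ideal.subset_span (by simp)))
  have hmem2 : (X 0 + X 1) * G2 ∈ I := by
    have h : (X 0 + X 1) * G2 = (X 1) * X 0 ^ (m+1+1) + (X 0 ^ (m+1)) * X 1 ^ 2 := by
      rw [hG2]; ring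
    rw [h]
    exact Ideal.add_mem _
      (Ideal.mul_mem_left _ _ (Ideal.subset_span (by simp)))
      (Ideal.mul_mem_left _ _ (Ideal.subset_span (by simp)))
  have hker : LinearMap.ker (LinearMap.mulLeft ℚ (Ideal.Quotient.mk I (X 0 + X 1)))
      = Submodule.span ℚ {Ideal.Quotient.mk I G1, Ideal.Quotient.mk I G2} := by
    apply le_antisymm
    · intro x hx
      obtain ⟨p, rfl⟩ := Ideal.Quotient.mk_surjective x
      rw [LinearMap.mem_ker, LinearMap.mulLeft_apply, ← map_mul,
        Ideal.Quotient.eq_zero_iff_mem] at hx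
      have key : ∀ i ≤ m + 1, ∀ j ≤ 1, coeff (mono i j) ((X 0 + X 1) * p) = 0 :=
        fun i hi j hj => coeff_relIdeal hx hi hj
      have hc : ∀ i ≤ m, coeff (mono i 0) p = 0 := by
        intro i hi
        have h := key (i+1) (by omega) 0 (by omega)
        rwa [coeff_mul_sum0] at h
      have hd : ∀ i ≤ m, coeff (mono i 1) p + coeff (mono (i+1) 0) p = 0 := by
        intro i hi
        have h := key (i+1) (by omega) 1 (by omega)
        rwa [coeff_mul_sum1] at h
      set c := coeff (mono (m+1) 0) p with hcdef
      set d := coeff (mono (m+1) 1) p with hddef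
      have hd0 : ∀ i < m, coeff (mono i 1) p = 0 := by
        intro i hi
        have h1 := hd i (by omega)
        have h2 := hc (i+1) (by omega)
        linarith
      have hdm : coeff (mono m 1) p + c = 0 := hd m le_rfl
      have hq : p - (c • G1 + d • G2) ∈ I := by
        apply mem_of_coeff
        intro i hi j hj
        have hco : coeff (mono i j) (p - (c • G1 + d • G2))
            = coeff (mono i j) p
              - (c * coeff (mono i j) G1 + d * coeff (mono i j) G2) := by
          simp [coeff_sub, coeff_add, coeff_smul, smul_eq_mul]
        rw [hco, hG1, hG2, XpowX_eq, XpowX_eq, Xpow_eq, coeff_sub,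
          coeff_monomial, coeff_monomial, coeff_monomial]
        interval_cases j
        · rcases Nat.lt_or_ge i (m+1) with h | h
          · rw [if_neg (by rw [mono_eq_iff]; omega), if_neg (by rw [mono_eq_iff]; omega),
              if_neg (by rw [mono_eq_iff]; omega), hc i (by omega)]
            ring
          · have : i = m + 1 := by omega
            subst this
            rw [if_pos rfl, if_neg (by rw [mono_eq_iff]; omega),
              if_neg (by rw [mono_eq_iff]; omega), ← hcdef]
            ring
        · rcases Nat.lt_or_ge i m with h | h
          · rw [if_neg (by rw [mono_eq_iff]; omega), if_neg (by rw [mono_eq_iff]; omega),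
              if_neg (by rw [mono_eq_iff]; omega), hd0 i h]
            ring
          · rcases Nat.lt_or_ge i (m+1) with h' | h'
            · have : i = m := by omega
              subst this
              rw [if_neg (by rw [mono_eq_iff]; omega), if_pos rfl,
                if_neg (by rw [mono_eq_iff]; omega)]
              linarith [hdm]
            · have : i = m + 1 := by omega
              subst this
              rw [if_neg (by rw [mono_eq_iff]; omega), if_neg (by rw [mono_eq_iff]; omega),
                if_pos rfl, ← hddef]
              ring
      rw [Submodule.mem_span_pair]
      refine ⟨c, d, ?_⟩
      rw [← mk_smul, ← mk_smul, ← map_add, Ideal.Quotient.eq]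
      have := I.neg_mem hq
      simpa [neg_sub] using this
    · rw [Submodule.span_le]
      rintro y (rfl | rfl)
      · rw [SetLike.mem_coe, LinearMap.mem_ker, LinearMap.mulLeft_apply, ← map_mul,
          Ideal.Quotient.eq_zero_iff_mem]
        exact hmem1
      · rw [SetLike.mem_coe, LinearMap.mem_ker, LinearMap.mulLeft_apply, ← map_mul,
          Ideal.Quotient.eq_zero_iff_mem]
        exact hmem2
  refine ⟨hker, ?_⟩
  have hli : LinearIndependent ℚ ![Ideal.Quotient.mk I G1, Ideal.Quotient.mk I G2] := by
    rw [LinearIndependent.pair_iff]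
    intro s t hst
    have hmem : s • G1 + t • G2 ∈ I := by
      rw [← Ideal.Quotient.eq_zero_iff_mem, map_add, mk_smul, mk_smul, hst]
    constructor
    · have h := coeff_relIdeal hmem (le_refl (m+1)) (zero_le_one)
      rw [coeff_add, coeff_smul, coeff_smul, hG1, hG2, XpowX_eq, XpowX_eq, Xpow_eq,
        coeff_sub, coeff_monomial, coeff_monomial, coeff_monomial,
        if_pos rfl, if_neg (by rw [mono_eq_iff]; omega), if_neg (by rw [mono_eq_iff]; omega)]
        at h
      simpa using h
    · have h := coeff_relIdeal hmem (le_refl (m+1)) (le_refl 1)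
      rw [coeff_add, coeff_smul, coeff_smul, hG1, hG2, XpowX_eq, XpowX_eq, Xpow_eq,
        coeff_sub, coeff_monomial, coeff_monomial, coeff_monomial,
        if_neg (by rw [mono_eq_iff]; omega), if_neg (by rw [mono_eq_iff]; omega), if_pos rfl]
        at h
      simpa using h
  have hrange : Set.range ![Ideal.Quotient.mk I G1, Ideal.Quotient.mk I G2]
      = {Ideal.Quotient.mk I G1, Ideal.Quotient.mk I G2} := by
    ext y
    simp only [Set.mem_range, Fin.exists_fin_two, Matrix.cons_val_zero, Matrix.cons_val_one,
      Matrix.head_cons, Set.mem_insert_iff, Set.mem_singleton_iff, eq_comm]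
  rw [hker, ← hrange, finrank_span_eq_card hli]
  simp

end
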